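/- In a single-server multiclass robust queueing system with J classes, suppose that during the busy period starting at time 0, the workload at time t satisfies W(t) ≤ t(ρ−1) + (4J+3)·λ̄_max·Γ²·φ(λ̄_max·t) for all t satisfying t ≥ max_j(e^e/λ_j, 1/λ_j + 3λ_max²Γ²/λ_j), where ρ < 1, λ̄_max > 0, Γ > 0 with λ̄_max·Γ ≥ min_j λ_j·Γ ≥ e^(2e), and φ(x) = √(x·ln(ln x)) for x ≥ e^e, φ(x)=1 otherwise. Then the busy period length B (the first time the right-hand side becomes negative, since W(t) ≥ 0 during the busy period) satisfies B ≤ (5(4J+3)²·λ̄_max³·Γ⁴/(1−ρ)²)·ln(ln(2(4J+3)·λ̄_max²·Γ²/(1−ρ))). -/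

import Mathlib

open Real

noncomputable def phi (x : ℝ) : ℝ :=
  if Real.exp (Real.exp 1) ≤ x then Real.sqrt (x * Real.log (Real.log x)) else 1

lemma aux_K (E q c r : ℝ) (hE1 : 1 ≤ E) (hq : E ≤ q) (h7 : 7 ≤ c)
    (hr0 : 0 < r) (hr1 : r ≤ 1) : 7 * E ^ 2 ≤ c * q ^ 2 / r := by
  rw [le_div_iff₀ hr0]
  nlinarith

lemma aux_key (E q p c r L : ℝ) (hE1 : 1 ≤ E) (hEp : E ≤ p) (hpq : p ≤ q) (h7 : 7 ≤ c)
    (hr0 : 0 < r) (hr1 : r ≤ 1) (hL1 : 1 ≤ L) :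
    245 * E ^ 2 * q ^ 2 ≤ 5 * c ^ 2 * q ^ 3 * p * L / r ^ 2 := by
  have hE0 : (0:ℝ) < E := by linarith
  have hp0 : (0:ℝ) < p := by linarith
  have hq1 : (1:ℝ) ≤ q := hE1.trans (hEp.trans hpq)
  have hq0 : (0:ℝ) < q := by linarith
  have hEq : E ≤ q := hEp.trans hpq
  have hEE : E * E ≤ p * q := mul_le_mul hEp hEq hE0.le (by linarith)
  have h1 : 245 * E ^ 2 * q ^ 2 ≤ 245 * p * q ^ 3 := by
    nlinarith [mul_le_mul_of_nonneg_right hEE (sq_nonneg q)]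
  have h2 : 245 * p * q ^ 3 ≤ 5 * c ^ 2 * q ^ 3 * p := by
    have h49 : (49:ℝ) ≤ c ^ 2 := by nlinarith
    have hpq3 : (0:ℝ) ≤ p * q ^ 3 := by positivity
    nlinarith [mul_le_mul_of_nonneg_right h49 hpq3]
  have h3 : 5 * c ^ 2 * q ^ 3 * p ≤ 5 * c ^ 2 * q ^ 3 * p * L := by
    have h0 : (0:ℝ) ≤ 5 * c ^ 2 * q ^ 3 * p := by positivity
    nlinarith
  have h4 : 5 * c ^ 2 * q ^ 3 * p * L ≤ 5 * c ^ 2 * q ^ 3 * p * L / r ^ 2 := by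
    rw [le_div_iff₀ (by positivity)]
    have h0 : (0:ℝ) ≤ 5 * c ^ 2 * q ^ 3 * p * L := by positivity
    have hr2 : r ^ 2 ≤ 1 := by nlinarith
    nlinarith [mul_le_mul_of_nonneg_left hr2 h0]
  linarith

lemma aux_thr1 (E q : ℝ) (hE1 : 1 ≤ E) (hq1 : 1 ≤ q) : E ≤ 245 * E ^ 2 * q ^ 2 := by
  have hE2 : E ≤ E ^ 2 := by nlinarith
  have hq2 : (1:ℝ) ≤ q ^ 2 := by nlinarith
  nlinarith [mul_le_mul_of_nonneg_left hq2 (show (0:ℝ) ≤ 245 * E ^ 2 by positivity)]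

lemma aux_thr2 (E q m : ℝ) (hE1 : 1 ≤ E) (hq1 : 1 ≤ q) (hm : 0 ≤ m) (hmq : m ≤ q) :
    1 + 3 * m ^ 2 ≤ 245 * E ^ 2 * q ^ 2 := by
  have hq2 : (1:ℝ) ≤ q ^ 2 := by nlinarith
  have hE2 : (1:ℝ) ≤ E ^ 2 := by nlinarith
  have hm2 : m ^ 2 ≤ q ^ 2 := by nlinarith [mul_le_mul hmq hmq hm (by linarith : (0:ℝ) ≤ q)]
  nlinarith [mul_le_mul_of_nonneg_right hE2 (show (0:ℝ) ≤ 245 * q ^ 2 by positivity)]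

lemma aux_x (E K L : ℝ) (hE1 : 1 ≤ E) (hK7 : 7 * E ^ 2 ≤ K) (hL1 : 1 ≤ L) :
    E ≤ 5 * K ^ 2 * L := by
  have hK1 : (1:ℝ) ≤ K := by nlinarith
  nlinarith

lemma aux_x32 (K L : ℝ) (hK1 : 1 ≤ K) (hL0 : 0 ≤ L) (hL : L ≤ 2 * K) :
    5 * K ^ 2 * L ≤ (2 * K) ^ 5 := by
  have h35 : K ^ 3 ≤ K ^ 5 := pow_le_pow_right₀ hK1 (by norm_num)
  have h1 : 5 * K ^ 2 * L ≤ 5 * K ^ 2 * (2 * K) := by nlinarith [sq_nonneg K]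
  have h2 : (10:ℝ) * K ^ 3 ≤ 10 * K ^ 5 := by linarith
  have h3 : ((2:ℝ) * K) ^ 5 = 32 * K ^ 5 := by ring
  nlinarith [pow_pos (show (0:ℝ) < K by linarith) 5]

lemma aux_u (v : ℝ) (h : 2 ≤ v) : 5 * v < v ^ 5 := by
  nlinarith [sq_nonneg v, sq_nonneg (v - 2), pow_pos (show (0:ℝ) < v by linarith) 3]

/-- Theorem 3.3(i), abstracted: in the multiclass single-server robust system,
if the workload during the busy period starting at 0 is nonnegative and satisfies
W(t) ≤ t(ρ-1) + (4J+3) λ̄max Γ² φ(λ̄max t) for all t beyond the stated threshold, then the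
busy-period length B satisfies
B ≤ (5(4J+3)² λ̄max³ Γ⁴/(1-ρ)²) ln ln (2(4J+3) λ̄max² Γ²/(1-ρ)). -/
theorem stmt15 (J : ℕ) (hJ : 1 ≤ J) (lam : Fin J → ℝ) (hlam : ∀ j, 0 < lam j)
    (lammax lbar Γ ρ B : ℝ) (W : ℝ → ℝ)
    (hlammax : ∀ j, lam j ≤ lammax) (hll : lammax ≤ lbar)
    (hρ0 : 0 ≤ ρ) (hρ : ρ < 1) (hΓ : 0 < Γ)
    (hmin : ∀ j, Real.exp (2 * Real.exp 1) ≤ lam j * Γ)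
    (hB : 0 ≤ B)
    (hWnn : ∀ t : ℝ, 0 ≤ t → t ≤ B → 0 ≤ W t)
    (hW : ∀ t : ℝ,
      (∀ j, Real.exp (Real.exp 1) / lam j ≤ t ∧
        1 / lam j + 3 * lammax ^ 2 * Γ ^ 2 / lam j ≤ t) →
      W t ≤ t * (ρ - 1) + (4 * J + 3) * lbar * Γ ^ 2 * phi (lbar * t)) :
    B ≤ 5 * (4 * J + 3) ^ 2 * lbar ^ 3 * Γ ^ 4 / (1 - ρ) ^ 2 *
        Real.log (Real.log (2 * (4 * J + 3) * lbar ^ 2 * Γ ^ 2 / (1 - ρ))) := by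
  by_contra hcon
  push_neg at hcon
  have j0 : Fin J := ⟨0, hJ⟩
  have hlam0 : 0 < lam j0 := hlam j0
  have hlmax : 0 < lammax := lt_of_lt_of_le hlam0 (hlammax j0)
  have hlb : 0 < lbar := lt_of_lt_of_le hlmax hll
  have h1ρ : 0 < 1 - ρ := by linarith
  have h1ρ1 : 1 - ρ ≤ 1 := by linarith
  have he1 : (2:ℝ) ≤ Real.exp 1 := by
    have := Real.add_one_le_exp (1:ℝ); linarith
  obtain ⟨E, hE⟩ : ∃ y : ℝ, y = Real.exp (2 * Real.exp 1) := ⟨_, rfl⟩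
  have hmin' : ∀ j, E ≤ lam j * Γ := fun j => by rw [hE]; exact hmin j
  have hE1 : (1:ℝ) ≤ E := by rw [hE]; exact Real.one_le_exp (by positivity)
  have hPE : E ≤ lbar * Γ := le_trans (hmin' j0)
    (mul_le_mul_of_nonneg_right (le_trans (hlammax j0) hll) hΓ.le)
  have hq1 : (1:ℝ) ≤ lbar * Γ := le_trans hE1 hPE
  have hJ7 : (7:ℝ) ≤ 4 * (J:ℝ) + 3 := by
    have : (1:ℝ) ≤ (J:ℝ) := by exact_mod_cast hJ
    linarith
  obtain ⟨K, hK⟩ : ∃ y : ℝ, y = (4 * (J:ℝ) + 3) * lbar ^ 2 * Γ ^ 2 / (1 - ρ) := ⟨_, rfl⟩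
  have hK7 : 7 * E ^ 2 ≤ K := by
    have h := aux_K E (lbar * Γ) (4 * (J:ℝ) + 3) (1 - ρ) hE1 hPE hJ7 h1ρ h1ρ1
    have heq : (4 * (J:ℝ) + 3) * (lbar * Γ) ^ 2 / (1 - ρ) = K := by rw [hK]; ring
    linarith [heq.ge, heq.le]
  have hKpos : (0:ℝ) < K := lt_of_lt_of_le (by positivity) hK7
  have hK1 : (1:ℝ) ≤ K := by nlinarith
  have h2K : E ^ 2 ≤ 2 * K := by nlinarith
  obtain ⟨u, hu⟩ : ∃ y : ℝ, y = Real.log (2 * K) := ⟨_, rfl⟩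
  have hE2 : E ^ 2 = Real.exp (2 * Real.exp 1 + 2 * Real.exp 1) := by
    rw [Real.exp_add, hE]; ring
  have hu4e : 4 * Real.exp 1 ≤ u := by
    have h := Real.log_le_log (by positivity : (0:ℝ) < E ^ 2) h2K
    rw [hE2, Real.log_exp] at h
    rw [hu]; linarith
  have hu2 : (2:ℝ) ≤ u := by linarith
  obtain ⟨L, hL⟩ : ∃ y : ℝ, y = Real.log u := ⟨_, rfl⟩
  have hL1 : (1:ℝ) ≤ L := by
    have heu : Real.exp 1 ≤ u := by linarith
    have h := Real.log_le_log (Real.exp_pos 1) heu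
    rw [Real.log_exp] at h
    rw [hL]; linarith
  have hLpos : (0:ℝ) < L := by linarith
  obtain ⟨T, hT⟩ : ∃ y : ℝ,
      y = 5 * (4 * (J:ℝ) + 3) ^ 2 * lbar ^ 3 * Γ ^ 4 / (1 - ρ) ^ 2 * L := ⟨_, rfl⟩
  have hgoalL : Real.log (Real.log (2 * (4 * (J:ℝ) + 3) * lbar ^ 2 * Γ ^ 2 / (1 - ρ))) = L := by
    rw [hL, hu, hK]; ring_nf
  have hTB : T < B := by
    rw [hT, ← hgoalL]
    exact hcon
  have hTpos : 0 < T := by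
    rw [hT]
    exact mul_pos (by positivity) hLpos
  obtain ⟨x, hxdef⟩ : ∃ y : ℝ, y = lbar * T := ⟨_, rfl⟩
  have hx5 : x = 5 * K ^ 2 * L := by
    rw [hxdef, hT, hK]; field_simp
  have hxpos : 0 < x := by rw [hxdef]; positivity
  -- key estimate for thresholds
  have hkey : ∀ j : Fin J, 245 * E ^ 2 * (lbar * Γ) ^ 2 ≤ lam j * T := by
    intro j
    have hj : 0 < lam j := hlam j
    have hjq : lam j * Γ ≤ lbar * Γ :=
      mul_le_mul_of_nonneg_right (le_trans (hlammax j) hll) hΓ.le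
    have h := aux_key E (lbar * Γ) (lam j * Γ) (4 * (J:ℝ) + 3) (1 - ρ) L
      hE1 (hmin' j) hjq hJ7 h1ρ h1ρ1 hL1
    have heq : 5 * (4 * (J:ℝ) + 3) ^ 2 * (lbar * Γ) ^ 3 * (lam j * Γ) * L / (1 - ρ) ^ 2
        = lam j * T := by
      rw [hT]; ring
    linarith [heq.le, heq.ge]
  have hthr : ∀ j : Fin J, Real.exp (Real.exp 1) / lam j ≤ T ∧
      1 / lam j + 3 * lammax ^ 2 * Γ ^ 2 / lam j ≤ T := by
    intro j
    have hj : 0 < lam j := hlam j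
    have hk := hkey j
    have hEe : Real.exp (Real.exp 1) ≤ E := by
      rw [hE]; exact Real.exp_le_exp.2 (by linarith [Real.exp_pos 1])
    have ht1 := aux_thr1 E (lbar * Γ) hE1 hq1
    constructor
    · rw [div_le_iff₀ hj]
      have : lam j * T = T * lam j := mul_comm _ _
      linarith
    · have heq : 1 / lam j + 3 * lammax ^ 2 * Γ ^ 2 / lam j
          = (1 + 3 * lammax ^ 2 * Γ ^ 2) / lam j := by
        field_simp
      rw [heq, div_le_iff₀ hj]
      have hmq : lammax * Γ ≤ lbar * Γ := mul_le_mul_of_nonneg_right hll hΓ.le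
      have ht2 := aux_thr2 E (lbar * Γ) (lammax * Γ) hE1 hq1 (by positivity) hmq
      have hm2 : lammax ^ 2 * Γ ^ 2 = (lammax * Γ) ^ 2 := by ring
      have : lam j * T = T * lam j := mul_comm _ _
      linarith
  have hWT := hW T hthr
  have hWT0 := hWnn T hTpos.le hTB.le
  -- negativity of the bound at T
  have hEx : E ≤ x := by
    rw [hx5]; exact aux_x E K L hE1 hK7 hL1
  have hxE : Real.exp (Real.exp 1) ≤ x := by
    have h1 : Real.exp (Real.exp 1) ≤ E := by
      rw [hE]; exact Real.exp_le_exp.2 (by linarith [Real.exp_pos 1])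
    linarith
  have hphix : phi x = Real.sqrt (x * Real.log (Real.log x)) := by
    rw [phi, if_pos hxE]
  have hlogxpos : (1:ℝ) < Real.log x := by
    have h : Real.exp 1 ≤ Real.log x := by
      have h := Real.log_le_log (Real.exp_pos _) hxE
      rwa [Real.log_exp] at h
    linarith
  have hlogx : Real.log x < u ^ 5 := by
    have hLu : L ≤ u := by
      rw [hL]; exact Real.log_le_self (by positivity)
    have hu2K : u ≤ 2 * K := by
      rw [hu]; exact Real.log_le_self (by positivity)
    have hx32 : x ≤ (2 * K) ^ 5 := by
      rw [hx5]; exact aux_x32 K L hK1 (by linarith) (by linarith)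
    have h1 : Real.log x ≤ Real.log ((2 * K) ^ 5) := Real.log_le_log hxpos hx32
    have h2 : Real.log ((2 * K) ^ 5) = 5 * u := by
      rw [Real.log_pow, hu]; push_cast; ring
    have h3 : 5 * u < u ^ 5 := aux_u u hu2
    linarith
  have hL5 : Real.log (Real.log x) < 5 * L := by
    have h := Real.log_lt_log (by linarith) hlogx
    have h2 : Real.log (u ^ 5) = 5 * L := by rw [Real.log_pow, hL]; push_cast; ring
    linarith [h2.le, h2.ge]
  have hxK : x * (5 * L) = (x / K) ^ 2 := by
    rw [hx5]; field_simp
  have hsq : Real.sqrt (x * Real.log (Real.log x)) < x / K := by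
    have h1 : x * Real.log (Real.log x) < x * (5 * L) :=
      mul_lt_mul_of_pos_left hL5 hxpos
    have h2 : Real.sqrt (x * Real.log (Real.log x)) < Real.sqrt (x * (5 * L)) := by
      apply Real.sqrt_lt_sqrt _ h1
      have hln : 0 ≤ Real.log (Real.log x) := Real.log_nonneg (by linarith)
      positivity
    have h3 : Real.sqrt (x * (5 * L)) = x / K := by
      rw [hxK, Real.sqrt_sq (by positivity)]
    linarith
  have hne1 : (4 * (J:ℝ) + 3) ≠ 0 := by positivity
  have hcK : (4 * (J:ℝ) + 3) * lbar * Γ ^ 2 * (x / K) = (1 - ρ) * T := by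
    rw [hK, hxdef]
    field_simp
  have hneg : T * (ρ - 1) + (4 * (J:ℝ) + 3) * lbar * Γ ^ 2 * phi (lbar * T) < 0 := by
    rw [← hxdef, hphix]
    have hc : (0:ℝ) < (4 * (J:ℝ) + 3) * lbar * Γ ^ 2 := by positivity
    have h := mul_lt_mul_of_pos_left hsq hc
    rw [hcK] at h
    have hr : T * (ρ - 1) = -((1 - ρ) * T) := by ring
    linarith
  linarith
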